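/- Every nonnegative integer n can be written as T_x + T_y + 4T_z for nonnegative integers x, y, z. -/

import Mathlib

/-- binary quadratic form value -/
def Q2 (A B C y z : ℤ) : ℤ := A*y^2 + 2*B*y*z + C*z^2

/-- ternary quadratic form value -/
def Q3 (a b c d e f x y z : ℤ) : ℤ := a*x^2 + b*y^2 + c*z^2 + 2*d*x*y + 2*e*x*z + 2*f*y*z

def D3 (a b c d e f : ℤ) : ℤ := a*b*c + 2*d*e*f - a*f^2 - b*e^2 - c*d^2

-- minimum existence, binary
lemma min2 (A B C : ℤ) (hpos : ∀ y z : ℤ, ¬(y = 0 ∧ z = 0) → 0 < Q2 A B C y z) :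
    ∃ μ : ℤ, 0 < μ ∧ (∃ y z, ¬(y = 0 ∧ z = 0) ∧ Q2 A B C y z = μ) ∧
      ∀ y z, ¬(y = 0 ∧ z = 0) → μ ≤ Q2 A B C y z := by
  classical
  set S : Set ℕ := {k | ∃ y z : ℤ, ¬(y = 0 ∧ z = 0) ∧ Q2 A B C y z = (k : ℤ)}
  have hA : 0 < Q2 A B C 1 0 := hpos 1 0 (by simp)
  have hne : S.Nonempty := ⟨(Q2 A B C 1 0).toNat, 1, 0, by simp, by rw [Int.toNat_of_nonneg hA.le]⟩
  obtain ⟨y, z, hyz, hval⟩ := Nat.sInf_mem hne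
  refine ⟨(sInf S : ℕ), ?_, ⟨y, z, hyz, hval⟩, ?_⟩
  · rw [← hval]; exact hpos y z hyz
  · intro y' z' h
    have h0 := hpos y' z' h
    have : (Q2 A B C y' z').toNat ∈ S := ⟨y', z', h, by rw [Int.toNat_of_nonneg h0.le]⟩
    have := Nat.sInf_le this
    omega

-- rounding: find x with |m*x + w| ≤ m/2  (as 2*|..| ≤ m)
lemma round_lemma (m w : ℤ) (hm : 0 < m) : ∃ x : ℤ, 2 * |m * x + w| ≤ m := by
  rcases le_or_gt (2 * (w % m)) m with h | h
  · refine ⟨-(w / m), ?_⟩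
    have h1 : m * -(w / m) + w = w % m := by
      rw [Int.emod_def]; ring
    rw [h1, abs_of_nonneg (Int.emod_nonneg w hm.ne')]
    exact h
  · refine ⟨-(w / m) - 1, ?_⟩
    have h1 : m * (-(w / m) - 1) + w = w % m - m := by
      rw [Int.emod_def]; ring
    have h2 : w % m < m := Int.emod_lt_of_pos w hm
    rw [h1, abs_of_nonpos (by omega)]
    omega

set_option maxHeartbeats 1000000 in
-- binary: a value at a nonzero point that is ≤ all nonzero values satisfies 3μ² ≤ 4 det,
-- and if det = 1 then the form is a sum of two squares of linear forms.
lemma hermite2 (A B C μ : ℤ) (hpos : ∀ y z : ℤ, ¬(y = 0 ∧ z = 0) → 0 < Q2 A B C y z)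
    (hach : ∃ y z, ¬(y = 0 ∧ z = 0) ∧ Q2 A B C y z = μ)
    (hle : ∀ y z, ¬(y = 0 ∧ z = 0) → μ ≤ Q2 A B C y z) :
    3 * μ^2 ≤ 4 * (A * C - B^2) ∧
    (A * C - B^2 = 1 → ∃ p q r s : ℤ, ∀ y z : ℤ,
      Q2 A B C y z = (p*y + q*z)^2 + (r*y + s*z)^2) := by
  obtain ⟨p0, q0, hpq0, hv0⟩ := hach
  have hμ : 0 < μ := hv0 ▸ hpos _ _ hpq0
  -- primitivity
  obtain ⟨g, hgdef⟩ : ∃ g : ℤ, g = (Int.gcd p0 q0 : ℤ) := ⟨_, rfl⟩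
  obtain ⟨p, hp⟩ : g ∣ p0 := hgdef ▸ Int.gcd_dvd_left _ _
  obtain ⟨q, hq⟩ : g ∣ q0 := hgdef ▸ Int.gcd_dvd_right _ _
  have hgne : g ≠ 0 := by
    rw [hgdef]
    simp only [Ne, Int.natCast_eq_zero, Int.gcd_eq_zero_iff]; tauto
  have hgnn : 0 ≤ g := hgdef ▸ Int.natCast_nonneg _
  have hpqne : ¬(p = 0 ∧ q = 0) := by
    rintro ⟨rfl, rfl⟩; rw [mul_zero] at hp hq; tauto
  have hvpq : Q2 A B C p q * g^2 = μ := by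
    rw [← hv0, hp, hq]; unfold Q2; ring
  have h1 : μ ≤ Q2 A B C p q := hle p q hpqne
  have h0 : 0 < Q2 A B C p q := hpos p q hpqne
  have hg1 : g = 1 := by
    by_contra hne
    have hg2 : 2 ≤ g := by omega
    have h4 : Q2 A B C p q * 4 ≤ Q2 A B C p q * g^2 :=
      mul_le_mul_of_nonneg_left (by nlinarith) h0.le
    linarith
  have hppq : Q2 A B C p q = μ := by rw [← hvpq, hg1]; ring
  rw [hg1, one_mul] at hp hq
  have hcop : IsCoprime p q := by
    rw [← hp, ← hq, Int.isCoprime_iff_gcd_eq_one]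
    have : (Int.gcd p0 q0 : ℤ) = 1 := hgdef ▸ hg1
    exact_mod_cast this
  -- Bezout: find r s with p * s - q * r = 1
  obtain ⟨u, v, huv⟩ := hcop
  obtain ⟨r, s, hdet1⟩ : ∃ r s : ℤ, p * s - q * r = 1 := ⟨-v, u, by linarith⟩
  -- transformed coefficients
  obtain ⟨B', hB'⟩ : ∃ B', B' = A*p*r + B*(p*s + q*r) + C*q*s := ⟨_, rfl⟩
  obtain ⟨C', hC'⟩ : ∃ C', C' = Q2 A B C r s := ⟨_, rfl⟩
  have htrans : ∀ y z : ℤ, Q2 μ B' C' y z = Q2 A B C (p*y + r*z) (q*y + s*z) := by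
    intro y z; rw [← hppq, hB', hC']; unfold Q2; ring
  have hdet' : μ * C' - B'^2 = A*C - B^2 := by
    have h5 : μ * C' - B'^2 = (A*C - B^2) * (p*s - q*r)^2 := by
      rw [← hppq, hB', hC']; unfold Q2; ring
    rw [h5, hdet1]; ring
  -- shear
  obtain ⟨t, ht⟩ := round_lemma μ B' hμ
  obtain ⟨B'', hB''⟩ : ∃ B'', B'' = μ * t + B' := ⟨_, rfl⟩
  obtain ⟨C'', hC''⟩ : ∃ C'', C'' = Q2 μ B' C' t 1 := ⟨_, rfl⟩
  have hC''val : C'' = Q2 A B C (p*t + r) (q*t + s) := by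
    rw [hC'', htrans t 1]; unfold Q2; ring_nf
  have hC''ne : ¬(p*t + r = 0 ∧ q*t + s = 0) := by
    rintro ⟨h1', h2'⟩
    have : p * s - q * r = 0 := by linear_combination p * h2' - q * h1'
    omega
  have hC''ge : μ ≤ C'' := hC''val ▸ hle _ _ hC''ne
  have hdet'' : μ * C'' - B''^2 = A*C - B^2 := by
    rw [← hdet', hC'', hB'']; unfold Q2; ring
  have habs : 4 * B''^2 ≤ μ^2 := by
    have h6 : 2 * |μ * t + B'| ≤ μ := ht
    have h7 : (2 * |μ * t + B'|)^2 ≤ μ^2 := by nlinarith [abs_nonneg (μ * t + B')]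
    rw [hB'']
    nlinarith [sq_abs (μ * t + B')]
  constructor
  · nlinarith
  · -- det = 1 case
    intro hd1
    have hμ1 : μ = 1 := by nlinarith
    have hB''0 : B'' = 0 := by nlinarith
    have hC''1 : C'' = 1 := by rw [hd1] at hdet''; nlinarith
    refine ⟨q*t+s, -(p*t+r), -q, p, ?_⟩
    intro y z
    have key : ∀ y' z' : ℤ, Q2 A B C (p*y' + (p*t+r)*z') (q*y' + (q*t+s)*z') = y'^2 + z'^2 := by
      intro y' z'
      have h8 : Q2 A B C (p*y' + (p*t+r)*z') (q*y' + (q*t+s)*z')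
          = Q2 A B C (p*(y' + t*z') + r*z') (q*(y' + t*z') + s*z') := by unfold Q2; ring
      rw [h8, ← htrans]
      have h9 : Q2 μ B' C' (y' + t*z') z' = Q2 μ B'' C'' y' z' := by
        rw [hB'', hC'']; unfold Q2; ring
      rw [h9, hμ1, hB''0, hC''1]; unfold Q2; ring
    have h2 := key ((q*t+s)*y - (p*t+r)*z) (-q*y + p*z)
    have e1 : p*((q*t+s)*y - (p*t+r)*z) + (p*t+r)*(-q*y + p*z) = (p*s - q*r) * y := by ring
    have e2 : q*((q*t+s)*y - (p*t+r)*z) + (q*t+s)*(-q*y + p*z) = (p*s - q*r) * z := by ring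
    rw [e1, e2, hdet1, one_mul, one_mul] at h2
    rw [h2]; ring

lemma min3 (a b c d e f : ℤ)
    (hpos : ∀ x y z : ℤ, ¬(x = 0 ∧ y = 0 ∧ z = 0) → 0 < Q3 a b c d e f x y z) :
    ∃ m : ℤ, 0 < m ∧ (∃ x y z, ¬(x = 0 ∧ y = 0 ∧ z = 0) ∧ Q3 a b c d e f x y z = m) ∧
      ∀ x y z, ¬(x = 0 ∧ y = 0 ∧ z = 0) → m ≤ Q3 a b c d e f x y z := by
  classical
  set S : Set ℕ := {k | ∃ x y z : ℤ, ¬(x = 0 ∧ y = 0 ∧ z = 0) ∧ Q3 a b c d e f x y z = (k : ℤ)}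
  have hA : 0 < Q3 a b c d e f 1 0 0 := hpos 1 0 0 (by simp)
  have hne : S.Nonempty :=
    ⟨(Q3 a b c d e f 1 0 0).toNat, 1, 0, 0, by simp, by rw [Int.toNat_of_nonneg hA.le]⟩
  obtain ⟨x, y, z, hxyz, hval⟩ := Nat.sInf_mem hne
  refine ⟨(sInf S : ℕ), ?_, ⟨x, y, z, hxyz, hval⟩, ?_⟩
  · rw [← hval]; exact hpos x y z hxyz
  · intro x' y' z' h
    have h0 := hpos x' y' z' h
    have : (Q3 a b c d e f x' y' z').toNat ∈ S :=
      ⟨x', y', z', h, by rw [Int.toNat_of_nonneg h0.le]⟩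
    have := Nat.sInf_le this
    omega

/-- Completion of a primitive vector to a matrix of determinant 1 (given as columns). -/
lemma complete3 (v1 v2 v3 : ℤ) (hprim : Int.gcd (Int.gcd v1 v2) v3 = 1) :
    ∃ w1 w2 w3 u1 u2 u3 : ℤ,
      v1 * (w2 * u3 - w3 * u2) - w1 * (v2 * u3 - v3 * u2) + u1 * (v2 * w3 - v3 * w2) = 1 := by
  rcases eq_or_ne (Int.gcd v1 v2) 0 with hg0 | hgne
  · -- v1 = v2 = 0, v3 = ±1
    rw [Int.gcd_eq_zero_iff] at hg0
    obtain ⟨h1, h2⟩ := hg0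
    rw [h1, h2] at hprim ⊢
    simp only [Int.gcd] at hprim
    -- gcd 0 v3 = |v3| = 1
    have : v3 = 1 ∨ v3 = -1 := by
      have : v3.natAbs = 1 := by simpa [Int.gcd] using hprim
      omega
    rcases this with h | h
    · exact ⟨0, 1, 0, -1, 0, 0, by rw [h]; ring⟩
    · exact ⟨0, 1, 0, 1, 0, 0, by rw [h]; ring⟩
  · obtain ⟨g, hgdef⟩ : ∃ g : ℤ, g = (Int.gcd v1 v2 : ℤ) := ⟨_, rfl⟩
    have hgne' : g ≠ 0 := by
      rw [hgdef]; exact_mod_cast fun h => hgne (by exact_mod_cast h)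
    obtain ⟨a', ha'⟩ : g ∣ v1 := hgdef ▸ Int.gcd_dvd_left _ _
    obtain ⟨b', hb'⟩ : g ∣ v2 := hgdef ▸ Int.gcd_dvd_right _ _
    -- Bezout for (v1, v2): x*v1 + y*v2 = g
    have hbez1 : (Int.gcd v1 v2 : ℤ) = v1 * Int.gcdA v1 v2 + v2 * Int.gcdB v1 v2 :=
      Int.gcd_eq_gcd_ab v1 v2
    obtain ⟨x, y, hxy⟩ : ∃ x y : ℤ, v1 * x + v2 * y = g := ⟨_, _, by rw [hgdef, hbez1]⟩
    -- Bezout for (g, v3): g*u + v3*w = 1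
    have hbez2 : (Int.gcd g v3 : ℤ) = g * Int.gcdA g v3 + v3 * Int.gcdB g v3 :=
      Int.gcd_eq_gcd_ab g v3
    have hgv3 : Int.gcd g v3 = 1 := by
      have : Int.gcd g v3 = Int.gcd (Int.gcd v1 v2) v3 := by
        rw [hgdef]
      rw [this, hprim]
    obtain ⟨u, w, huw⟩ : ∃ u w : ℤ, g * u + v3 * w = 1 :=
      ⟨_, _, by rw [← hbez2, hgv3, Nat.cast_one]⟩
    -- x*a' + y*b' = 1
    have hxa : x * a' + y * b' = 1 := by
      have h2 : g * (x * a' + y * b') = g * 1 := by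
        rw [mul_one]
        calc g * (x * a' + y * b') = v1 * x + v2 * y := by rw [ha', hb']; ring
        _ = g := hxy
      exact mul_left_cancel₀ hgne' h2
    -- columns: (v1,v2,v3), (-y, x, 0), (-w*a', -w*b', u)
    refine ⟨-y, x, 0, -w*a', -w*b', u, ?_⟩
    -- det = u*(v1*x + v2*y) + v3*w*(x*a' + y*b') = u*g + v3*w = 1
    have hv1 : v1 = g * a' := ha'
    have hv2 : v2 = g * b' := hb'
    linear_combination u * hxy + v3 * w * hxa + huw

/-- bilinear form of `Q3` -/
def B3 (a b c d e f u1 u2 u3 v1 v2 v3 : ℤ) : ℤ :=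
  a*u1*v1 + b*u2*v2 + c*u3*v3 + d*(u1*v2+u2*v1) + e*(u1*v3+u3*v1) + f*(u2*v3+u3*v2)

set_option maxHeartbeats 4000000 in
/-- A positive definite classically-integral ternary quadratic form of determinant 1
is a sum of squares of three integral linear forms. -/
theorem ternary_sos (a b c d e f : ℤ)
    (hpos : ∀ x y z : ℤ, ¬(x = 0 ∧ y = 0 ∧ z = 0) → 0 < Q3 a b c d e f x y z)
    (hdet : D3 a b c d e f = 1) :
    ∃ p1 p2 p3 q1 q2 q3 r1 r2 r3 : ℤ, ∀ x y z : ℤ,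
      Q3 a b c d e f x y z =
        (p1*x+p2*y+p3*z)^2 + (q1*x+q2*y+q3*z)^2 + (r1*x+r2*y+r3*z)^2 := by
  obtain ⟨m, hm0, ⟨t1, t2, t3, htne, htval⟩, hmle⟩ := min3 a b c d e f hpos
  -- primitivity of the minimal vector
  obtain ⟨G, hGdef⟩ : ∃ G : ℤ, G = (Int.gcd (Int.gcd t1 t2) t3 : ℤ) := ⟨_, rfl⟩
  have hGd1 : G ∣ t1 := hGdef ▸ dvd_trans (Int.gcd_dvd_left _ _) (Int.gcd_dvd_left _ _)
  have hGd2 : G ∣ t2 := hGdef ▸ dvd_trans (Int.gcd_dvd_left _ _) (Int.gcd_dvd_right _ _)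
  have hGd3 : G ∣ t3 := hGdef ▸ Int.gcd_dvd_right _ _
  obtain ⟨v1, hv1⟩ := hGd1
  obtain ⟨v2, hv2⟩ := hGd2
  obtain ⟨v3, hv3⟩ := hGd3
  have hGne : G ≠ 0 := by
    rw [hGdef]
    simp only [Ne, Int.natCast_eq_zero, Int.gcd_eq_zero_iff]
    tauto
  have hGnn : 0 ≤ G := hGdef ▸ Int.natCast_nonneg _
  have hvne : ¬(v1 = 0 ∧ v2 = 0 ∧ v3 = 0) := by
    rintro ⟨rfl, rfl, rfl⟩; rw [mul_zero] at hv1 hv2 hv3; tauto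
  have hvGval : Q3 a b c d e f v1 v2 v3 * G^2 = m := by
    rw [← htval, hv1, hv2, hv3]; unfold Q3; ring
  have hvlow : m ≤ Q3 a b c d e f v1 v2 v3 := hmle _ _ _ hvne
  have hvpos : 0 < Q3 a b c d e f v1 v2 v3 := hpos _ _ _ hvne
  have hG1 : G = 1 := by
    by_contra hne
    have hG2 : 2 ≤ G := by omega
    have h4 : Q3 a b c d e f v1 v2 v3 * 4 ≤ Q3 a b c d e f v1 v2 v3 * G^2 :=
      mul_le_mul_of_nonneg_left (by nlinarith) hvpos.le
    linarith
  rw [hG1, one_mul] at hv1 hv2 hv3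
  subst hv1 hv2 hv3
  have hvm : Q3 a b c d e f t1 t2 t3 = m := by rw [← hvGval, hG1]; ring
  have hprim : Int.gcd (Int.gcd t1 t2) t3 = 1 := by
    have : G = 1 := hG1
    rw [hGdef] at this
    exact_mod_cast this
  -- complete to a unimodular matrix (columns v, w, u)
  obtain ⟨w1, w2, w3, u1, u2, u3, hW⟩ := complete3 t1 t2 t3 hprim
  -- transformed form
  obtain ⟨b2', hb2'⟩ : ∃ t, t = Q3 a b c d e f w1 w2 w3 := ⟨_, rfl⟩
  obtain ⟨b3', hb3'⟩ : ∃ t, t = Q3 a b c d e f u1 u2 u3 := ⟨_, rfl⟩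
  obtain ⟨b12, hb12⟩ : ∃ t, t = B3 a b c d e f t1 t2 t3 w1 w2 w3 := ⟨_, rfl⟩
  obtain ⟨b13, hb13⟩ : ∃ t, t = B3 a b c d e f t1 t2 t3 u1 u2 u3 := ⟨_, rfl⟩
  obtain ⟨b23, hb23⟩ : ∃ t, t = B3 a b c d e f w1 w2 w3 u1 u2 u3 := ⟨_, rfl⟩
  have htrans : ∀ x y z : ℤ, Q3 m b2' b3' b12 b13 b23 x y z =
      Q3 a b c d e f (t1*x + w1*y + u1*z) (t2*x + w2*y + u2*z) (t3*x + w3*y + u3*z) := by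
    intro x y z
    rw [← hvm, hb2', hb3', hb12, hb13, hb23]
    unfold Q3 B3; ring
  have hdetg : D3 m b2' b3' b12 b13 b23 = 1 := by
    have h1 : D3 m b2' b3' b12 b13 b23 = D3 a b c d e f *
        (t1 * (w2 * u3 - w3 * u2) - w1 * (t2 * u3 - t3 * u2) + u1 * (t2 * w3 - t3 * w2))^2 := by
      rw [← hvm, hb2', hb3', hb12, hb13, hb23]
      unfold D3 Q3 B3; ring
    rw [h1, hW, hdet]; ring
  -- injectivity of the substitution
  have hinj : ∀ x y z : ℤ, ¬(x = 0 ∧ y = 0 ∧ z = 0) →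
      ¬(t1*x + w1*y + u1*z = 0 ∧ t2*x + w2*y + u2*z = 0 ∧ t3*x + w3*y + u3*z = 0) := by
    intro x y z hne ⟨h1, h2, h3⟩
    apply hne
    refine ⟨?_, ?_, ?_⟩
    · linear_combination (w2*u3 - w3*u2) * h1 - (w1*u3 - w3*u1) * h2 + (w1*u2 - w2*u1) * h3 - x * hW
    · linear_combination (-(t2*u3 - t3*u2)) * h1 + (t1*u3 - t3*u1) * h2 - (t1*u2 - t2*u1) * h3 - y * hW
    · linear_combination (t2*w3 - t3*w2) * h1 - (t1*w3 - t3*w1) * h2 + (t1*w2 - t2*w1) * h3 - z * hW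
  have hgpos : ∀ x y z : ℤ, ¬(x = 0 ∧ y = 0 ∧ z = 0) → 0 < Q3 m b2' b3' b12 b13 b23 x y z := by
    intro x y z h; rw [htrans]; exact hpos _ _ _ (hinj x y z h)
  have hgmin : ∀ x y z : ℤ, ¬(x = 0 ∧ y = 0 ∧ z = 0) → m ≤ Q3 m b2' b3' b12 b13 b23 x y z := by
    intro x y z h; rw [htrans]; exact hmle _ _ _ (hinj x y z h)
  -- Schur complement binary form
  obtain ⟨A, hA⟩ : ∃ t, t = m * b2' - b12^2 := ⟨_, rfl⟩
  obtain ⟨Bc, hBc⟩ : ∃ t, t = m * b23 - b12*b13 := ⟨_, rfl⟩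
  obtain ⟨C, hC⟩ : ∃ t, t = m * b3' - b13^2 := ⟨_, rfl⟩
  have hkey : ∀ x y z : ℤ, m * Q3 m b2' b3' b12 b13 b23 x y z =
      (m*x + b12*y + b13*z)^2 + Q2 A Bc C y z := by
    intro x y z; rw [hA, hBc, hC]; unfold Q3 Q2; ring
  have hdetQ2 : A * C - Bc^2 = m := by
    have h1 : A * C - Bc^2 = m * D3 m b2' b3' b12 b13 b23 := by
      rw [hA, hBc, hC]; unfold D3; ring
    rw [h1, hdetg]; ring
  -- lower bound for the binary form
  have hQlow : ∀ y z : ℤ, ¬(y = 0 ∧ z = 0) → 3 * m^2 ≤ 4 * Q2 A Bc C y z := by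
    intro y z hyz
    obtain ⟨x, hx⟩ := round_lemma m (b12*y + b13*z) hm0
    have hne' : ¬(x = 0 ∧ y = 0 ∧ z = 0) := by tauto
    have h1 : m ≤ Q3 m b2' b3' b12 b13 b23 x y z := hgmin x y z hne'
    have h2 := hkey x y z
    have h3 : (2 * |m * x + (b12*y + b13*z)|)^2 ≤ m^2 := by
      nlinarith [abs_nonneg (m * x + (b12*y + b13*z))]
    nlinarith [sq_abs (m * x + (b12*y + b13*z))]
  have hQpos : ∀ y z : ℤ, ¬(y = 0 ∧ z = 0) → 0 < Q2 A Bc C y z := by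
    intro y z hyz
    have := hQlow y z hyz
    nlinarith
  -- minimum of the binary form, Hermite bound, conclude m = 1
  obtain ⟨μ, hμ0, hμach, hμle⟩ := min2 A Bc C hQpos
  obtain ⟨hherm, hsos2⟩ := hermite2 A Bc C μ hQpos hμach hμle
  have hμlow : 3 * m^2 ≤ 4 * μ := by
    obtain ⟨y, z, hyz, hval⟩ := hμach
    rw [← hval]; exact hQlow y z hyz
  rw [hdetQ2] at hherm
  have hm1 : m = 1 := by nlinarith
  subst hm1
  -- binary form has det 1, so it's a sum of two squares of linear forms
  obtain ⟨p, q, r, s, hpqrs⟩ := hsos2 hdetQ2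
  -- so the transformed form g is a sum of three squares of linear forms
  have hgsos : ∀ x y z : ℤ, Q3 1 b2' b3' b12 b13 b23 x y z =
      (1*x + b12*y + b13*z)^2 + (p*y + q*z)^2 + (r*y + s*z)^2 := by
    intro x y z
    have h1 := hkey x y z
    rw [one_mul] at h1
    rw [h1, hpqrs y z]; ring
  -- transfer back to f via the adjugate
  refine ⟨(w2*u3 - w3*u2) + b12*(-(t2*u3 - t3*u2)) + b13*(t2*w3 - t3*w2),
          (-(w1*u3 - w3*u1)) + b12*(t1*u3 - t3*u1) + b13*(-(t1*w3 - t3*w1)),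
          (w1*u2 - w2*u1) + b12*(-(t1*u2 - t2*u1)) + b13*(t1*w2 - t2*w1),
          p*(-(t2*u3 - t3*u2)) + q*(t2*w3 - t3*w2),
          p*(t1*u3 - t3*u1) + q*(-(t1*w3 - t3*w1)),
          p*(-(t1*u2 - t2*u1)) + q*(t1*w2 - t2*w1),
          r*(-(t2*u3 - t3*u2)) + s*(t2*w3 - t3*w2),
          r*(t1*u3 - t3*u1) + s*(-(t1*w3 - t3*w1)),
          r*(-(t1*u2 - t2*u1)) + s*(t1*w2 - t2*w1), ?_⟩
  intro X Y Z
  obtain ⟨x, hxdef⟩ : ∃ t, t = (w2*u3 - w3*u2)*X + (-(w1*u3 - w3*u1))*Y + (w1*u2 - w2*u1)*Z :=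
    ⟨_, rfl⟩
  obtain ⟨y, hydef⟩ : ∃ t, t = (-(t2*u3 - t3*u2))*X + (t1*u3 - t3*u1)*Y + (-(t1*u2 - t2*u1))*Z :=
    ⟨_, rfl⟩
  obtain ⟨z, hzdef⟩ : ∃ t, t = (t2*w3 - t3*w2)*X + (-(t1*w3 - t3*w1))*Y + (t1*w2 - t2*w1)*Z :=
    ⟨_, rfl⟩
  have hXeq : t1*x + w1*y + u1*z = X := by
    rw [hxdef, hydef, hzdef]; linear_combination X * hW
  have hYeq : t2*x + w2*y + u2*z = Y := by
    rw [hxdef, hydef, hzdef]; linear_combination Y * hW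
  have hZeq : t3*x + w3*y + u3*z = Z := by
    rw [hxdef, hydef, hzdef]; linear_combination Z * hW
  calc Q3 a b c d e f X Y Z
      = Q3 a b c d e f (t1*x + w1*y + u1*z) (t2*x + w2*y + u2*z) (t3*x + w3*y + u3*z) := by
        rw [hXeq, hYeq, hZeq]
    _ = Q3 1 b2' b3' b12 b13 b23 x y z := (htrans x y z).symm
    _ = (1*x + b12*y + b13*z)^2 + (p*y + q*z)^2 + (r*y + s*z)^2 := hgsos x y z
    _ = _ := by rw [hxdef, hydef, hzdef]; ring


set_option maxHeartbeats 2000000 in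
/-- Every natural number ≡ 2 mod 4 is a sum of three squares. -/
lemma three_squares_two_mod_four (n : ℕ) (h2 : n % 4 = 2) :
    ∃ x y z : ℤ, (n : ℤ) = x^2 + y^2 + z^2 := by
  have hn2 : 2 ≤ n := by omega
  -- coprimality for Dirichlet
  have hodd : ¬ 2 ∣ (n-1) := by omega
  have hc2 : Nat.Coprime 2 (n-1) := (Nat.Prime.coprime_iff_not_dvd Nat.prime_two).mpr hodd
  have hc4 : Nat.Coprime (n-1) 4 := by
    have h4 : (4:ℕ) = 2^2 := rfl
    rw [h4, Nat.coprime_pow_right_iff (by norm_num)]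
    exact hc2.symm
  have hcn : Nat.Coprime (n-1) n := by
    obtain ⟨m, rfl⟩ : ∃ m, n = m + 1 := ⟨n-1, by omega⟩
    simpa using (Nat.coprime_succ_self m).symm
  have hc4n : Nat.Coprime (n-1) (4*n) := Nat.Coprime.mul_right hc4 hcn
  haveI : NeZero (4*n) := ⟨by omega⟩
  have hunit : IsUnit ((n-1 : ℕ) : ZMod (4*n)) := (ZMod.isUnit_iff_coprime _ _).mpr hc4n
  -- Dirichlet's theorem
  obtain ⟨p, hpgt, hpp, hpmod⟩ := Nat.forall_exists_prime_gt_and_eq_mod hunit (4*n)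
  haveI : Fact p.Prime := ⟨hpp⟩
  have hpmod' : p % (4*n) = (n-1) % (4*n) := (ZMod.natCast_eq_natCast_iff' _ _ _).mp hpmod
  have hlt : (n-1) % (4*n) = n - 1 := Nat.mod_eq_of_lt (by omega)
  obtain ⟨j, hj⟩ : ∃ j, p = 4*n*j + (n-1) :=
    ⟨p / (4*n), by conv_lhs => rw [← Nat.div_add_mod p (4*n), hpmod', hlt]⟩
  have hj1 : 1 ≤ j := by
    rcases Nat.eq_zero_or_pos j with rfl | h
    · simp at hj; omega
    · exact h
  -- D = 4j+1, p = n*D - 1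
  obtain ⟨D, hDdef⟩ : ∃ D : ℕ, D = 4*j+1 := ⟨_, rfl⟩
  have hD4 : D % 4 = 1 := by omega
  have hD5 : 5 ≤ D := by omega
  have hnD : n * D = p + 1 := by
    have h0 : n - 1 + 1 = n := by omega
    rw [hDdef, hj, Nat.add_assoc, h0]; ring
  have hp41 : p % 4 = 1 := by
    have hm : (n * D) % 4 = 2 := by rw [Nat.mul_mod, h2, hD4]
    omega
  have hp2 : p ≠ 2 := by omega
  have hpodd : Odd p := by
    rw [Nat.odd_iff]; omega
  have hDltp : D < p := by nlinarith
  -- -D is a square mod p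
  have hDdvd : (D : ℤ) ∣ (p : ℤ) + 1 :=
    ⟨n, by have h := hnD; zify at h; linear_combination -h⟩
  have hjac : legendreSym p (-(D:ℤ)) = 1 := by
    have hmul : legendreSym p (-(D:ℤ)) = legendreSym p (-1) * legendreSym p (D:ℤ) := by
      rw [← legendreSym.mul]; norm_num
    have h1 : legendreSym p (-1) = 1 := by
      rw [legendreSym.at_neg_one hp2, ZMod.χ₄_nat_one_mod_four hp41]
    have h2' : legendreSym p (D:ℤ) = 1 := by
      rw [jacobiSym.legendreSym.to_jacobiSym]
      have hrec : jacobiSym (D : ℤ) p = jacobiSym (p : ℤ) D :=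
        jacobiSym.quadratic_reciprocity_one_mod_four hD4 hpodd
      rw [hrec]
      have hmod : ((p : ℤ)) % D = (-1 : ℤ) % D := by
        rw [Int.emod_eq_emod_iff_emod_sub_eq_zero]
        rw [show (p:ℤ) - (-1) = (p:ℤ) + 1 by ring]
        exact Int.emod_eq_zero_of_dvd hDdvd
      rw [jacobiSym.mod_left' hmod, jacobiSym.at_neg_one (by rw [Nat.odd_iff]; omega),
        ZMod.χ₄_nat_one_mod_four hD4]
    rw [hmul, h1, h2']; ring
  have hDne : ((-(D:ℤ) : ℤ) : ZMod p) ≠ 0 := by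
    rw [Int.cast_neg, neg_ne_zero]
    push_cast
    rw [Ne, ZMod.natCast_eq_zero_iff]
    intro hdvd
    have := Nat.le_of_dvd (by omega) hdvd
    omega
  have hsq : IsSquare ((-(D:ℤ) : ℤ) : ZMod p) := (legendreSym.eq_one_iff p hDne).mp hjac
  obtain ⟨s, hs⟩ := hsq
  -- lift to ℤ : p ∣ b² + D
  obtain ⟨bb, hbdvd⟩ : ∃ bb : ℤ, (p : ℤ) ∣ bb^2 + D := by
    refine ⟨(s.val : ℤ), ?_⟩
    rw [← ZMod.intCast_zmod_eq_zero_iff_dvd]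
    push_cast
    rw [ZMod.natCast_val, ZMod.cast_id]
    have hs' : (s : ZMod p) * s = -(D : ZMod p) := by
      have hc : ((-(D:ℤ) : ℤ) : ZMod p) = -(D : ZMod p) := by push_cast; ring
      rw [hc] at hs
      linear_combination -hs
    linear_combination hs'
  obtain ⟨a0, ha0⟩ := hbdvd
  have ha0' : bb^2 + (D:ℤ) = (p:ℤ) * a0 := ha0
  have ha0pos : 0 < a0 := by nlinarith [sq_nonneg bb, (by exact_mod_cast hpp.pos : (0:ℤ) < (p:ℤ))]
  -- integer facts
  have hnDZ : (n:ℤ) * (D:ℤ) = (p:ℤ) + 1 := by exact_mod_cast hnD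
  have hDZ5 : (5:ℤ) ≤ (D:ℤ) := by exact_mod_cast hD5
  have hpZ : (0:ℤ) < (p:ℤ) := by exact_mod_cast hpp.pos
  have hnZ : (2:ℤ) ≤ (n:ℤ) := by exact_mod_cast hn2
  -- the ternary form [[a0, bb, 1], [bb, p, 0], [1, 0, n]]
  have hdet3 : D3 a0 (p:ℤ) (n:ℤ) bb 1 0 = 1 := by
    unfold D3
    linear_combination (-(n:ℤ)) * ha0' + hnDZ
  have hkey : ∀ x y z : ℤ, a0 * (D:ℤ) * Q3 a0 (p:ℤ) (n:ℤ) bb 1 0 x y z =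
      (D:ℤ) * (a0*x + bb*y + z)^2 + ((D:ℤ)*y - bb*z)^2 + a0 * z^2 := by
    intro x y z
    unfold Q3
    linear_combination (-(D:ℤ)*y^2 - z^2) * ha0' + (a0*z^2) * hnDZ
  have hpos3 : ∀ x y z : ℤ, ¬(x = 0 ∧ y = 0 ∧ z = 0) → 0 < Q3 a0 (p:ℤ) (n:ℤ) bb 1 0 x y z := by
    intro x y z hne
    have hk := hkey x y z
    have hrhs : 0 < (D:ℤ) * (a0*x + bb*y + z)^2 + ((D:ℤ)*y - bb*z)^2 + a0 * z^2 := by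
      rcases eq_or_ne z 0 with rfl | hz
      · rcases eq_or_ne y 0 with rfl | hy
        · have hx : x ≠ 0 := by tauto
          have h1 : a0 * x ≠ 0 := mul_ne_zero (by omega) hx
          have h2 : (0:ℤ) < (a0*x + bb*0 + 0)^2 := by
            rcases h1.lt_or_gt with h | h <;> nlinarith
          nlinarith [sq_nonneg ((D:ℤ)*0 - bb*0)]
        · have h2 : (0:ℤ) < ((D:ℤ)*y - bb*0)^2 := by
            have : (D:ℤ)*y ≠ 0 := mul_ne_zero (by omega) hy
            rcases this.lt_or_gt with h | h <;> nlinarith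
          nlinarith [sq_nonneg (a0*x + bb*y + 0), mul_nonneg (by omega : (0:ℤ) ≤ (D:ℤ))
            (sq_nonneg (a0*x + bb*y + 0))]
      · have h2 : (0:ℤ) < a0 * z^2 := by
          have : (0:ℤ) < z^2 := by rcases hz.lt_or_gt with h | h <;> nlinarith
          nlinarith
        nlinarith [sq_nonneg ((D:ℤ)*y - bb*z), mul_nonneg (by omega : (0:ℤ) ≤ (D:ℤ))
          (sq_nonneg (a0*x + bb*y + z))]
    nlinarith [mul_pos ha0pos (show (0:ℤ) < (D:ℤ) by omega)]
  obtain ⟨p1, p2, p3, q1, q2, q3, r1, r2, r3, hsos⟩ := ternary_sos a0 (p:ℤ) (n:ℤ) bb 1 0 hpos3 hdet3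
  refine ⟨p3, q3, r3, ?_⟩
  have := hsos 0 0 1
  unfold Q3 at this
  rw [show a0*0^2 + (p:ℤ)*0^2 + (n:ℤ)*1^2 + 2*bb*0*0 + 2*1*0*1 + 2*0*0*1 = (n:ℤ) by ring] at this
  rw [this]; ring

/-- The `n`-th triangular number. -/
def T (n : ℕ) : ℕ := n * (n + 1) / 2

lemma odd_sq_int (k : ℤ) (h : k % 2 = 1) : ∃ t, k^2 = 8*t+1 := by
  obtain ⟨m, hm⟩ : ∃ m, k = 2*m+1 := ⟨k/2, by omega⟩
  obtain ⟨t, ht⟩ := Int.even_mul_succ_self m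
  exact ⟨t, by rw [hm]; linear_combination 4*ht⟩

lemma eight_T (m : ℕ) : 8 * T m + 1 = (2*m+1)^2 := by
  have h2 : 2 * T m = m * (m+1) := by
    unfold T
    exact Nat.mul_div_cancel' (even_iff_two_dvd.mp (Nat.even_mul_succ_self m)) |>.symm ▸
      (Nat.mul_div_cancel' ((Nat.even_mul_succ_self m).two_dvd))
  calc 8 * T m + 1 = 4*(2*T m)+1 := by ring
    _ = 4*(m*(m+1))+1 := by rw [h2]
    _ = (2*m+1)^2 := by ring

theorem liouville_1_1_4 (n : ℕ) : ∃ x y z : ℕ, n = T x + T y + 4 * T z := by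
  obtain ⟨x, y, z, hxyz⟩ := three_squares_two_mod_four (8*n+6) (by omega)
  push_cast at hxyz
  have main : ∀ A B Cc : ℤ, 8*(n:ℤ)+6 = A^2 + B^2 + Cc^2 → A % 2 = 1 → B % 2 = 1 →
      Cc % 2 = 0 → ∃ X Y Z : ℕ, n = T X + T Y + 4 * T Z := by
    intro A B Cc heq hA hB hC
    obtain ⟨s, hsA⟩ := odd_sq_int A hA
    obtain ⟨t, hsB⟩ := odd_sq_int B hB
    obtain ⟨w, hw⟩ : ∃ w, Cc = 2*w := ⟨Cc/2, by omega⟩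
    obtain ⟨W, hW⟩ : ∃ W : ℤ, W = w^2 := ⟨_, rfl⟩
    have hweq : 8*(n:ℤ)+6 = 8*s+1 + (8*t+1) + 4*W := by
      rw [hW]; linear_combination heq + hsA + hsB + (Cc + 2*w) * hw
    have hwodd : w % 2 = 1 := by
      rcases Int.emod_two_eq_zero_or_one w with h | h
      · obtain ⟨u, hu⟩ : ∃ u, w = 2*u := ⟨w/2, by omega⟩
        obtain ⟨U, hU⟩ : ∃ U : ℤ, U = u^2 := ⟨_, rfl⟩
        have : W = 4*U := by rw [hW, hU, hu]; ring
        omega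
      · exact h
    -- convert to naturals
    obtain ⟨X, hX⟩ : ∃ X : ℕ, A.natAbs = 2*X+1 := ⟨(A.natAbs - 1)/2, by omega⟩
    obtain ⟨Y, hY⟩ : ∃ Y : ℕ, B.natAbs = 2*Y+1 := ⟨(B.natAbs - 1)/2, by omega⟩
    obtain ⟨Z, hZ⟩ : ∃ Z : ℕ, w.natAbs = 2*Z+1 := ⟨(w.natAbs - 1)/2, by omega⟩
    have hA2 : A^2 = ((2*X+1 : ℕ) : ℤ)^2 := by
      rw [← sq_abs A, Int.abs_eq_natAbs, hX]
    have hB2 : B^2 = ((2*Y+1 : ℕ) : ℤ)^2 := by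
      rw [← sq_abs B, Int.abs_eq_natAbs, hY]
    have hw2 : w^2 = ((2*Z+1 : ℕ) : ℤ)^2 := by
      rw [← sq_abs w, Int.abs_eq_natAbs, hZ]
    have hnat : (8*n+6 : ℕ) = (2*X+1)^2 + (2*Y+1)^2 + 4*(2*Z+1)^2 := by
      have hZeq : (8*(n:ℤ)+6 : ℤ) = ((2*X+1 : ℕ) : ℤ)^2 + ((2*Y+1 : ℕ) : ℤ)^2
          + 4*((2*Z+1 : ℕ) : ℤ)^2 := by
        rw [← hA2, ← hB2, ← hw2]
        linear_combination heq + (Cc + 2*w) * hw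
      exact_mod_cast hZeq
    refine ⟨X, Y, Z, ?_⟩
    rw [← eight_T X, ← eight_T Y, ← eight_T Z] at hnat
    omega
  rcases Int.emod_two_eq_zero_or_one x with hx | hx <;>
    rcases Int.emod_two_eq_zero_or_one y with hy | hy <;>
    rcases Int.emod_two_eq_zero_or_one z with hz | hz
  -- (0,0,0)
  · exfalso
    obtain ⟨a1, ha1⟩ : ∃ a1, x = 2*a1 := ⟨x/2, by omega⟩
    obtain ⟨b1, hb1⟩ : ∃ b1, y = 2*b1 := ⟨y/2, by omega⟩
    obtain ⟨c1, hc1⟩ : ∃ c1, z = 2*c1 := ⟨z/2, by omega⟩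
    obtain ⟨K, hK⟩ : ∃ K : ℤ, K = a1^2 + b1^2 + c1^2 := ⟨_, rfl⟩
    have : 8*(n:ℤ)+6 = 4*K := by
      rw [hK]; linear_combination hxyz + (x+2*a1)*ha1 + (y+2*b1)*hb1 + (z+2*c1)*hc1
    omega
  -- (0,0,1)
  · exfalso
    obtain ⟨a1, ha1⟩ : ∃ a1, x = 2*a1 := ⟨x/2, by omega⟩
    obtain ⟨b1, hb1⟩ : ∃ b1, y = 2*b1 := ⟨y/2, by omega⟩
    obtain ⟨s, hs⟩ := odd_sq_int z hz
    obtain ⟨K, hK⟩ : ∃ K : ℤ, K = a1^2 + b1^2 := ⟨_, rfl⟩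
    have : 8*(n:ℤ)+6 = 4*K + (8*s+1) := by
      rw [hK]; linear_combination hxyz + (x+2*a1)*ha1 + (y+2*b1)*hb1 + hs
    omega
  -- (0,1,0)
  · exfalso
    obtain ⟨a1, ha1⟩ : ∃ a1, x = 2*a1 := ⟨x/2, by omega⟩
    obtain ⟨c1, hc1⟩ : ∃ c1, z = 2*c1 := ⟨z/2, by omega⟩
    obtain ⟨s, hs⟩ := odd_sq_int y hy
    obtain ⟨K, hK⟩ : ∃ K : ℤ, K = a1^2 + c1^2 := ⟨_, rfl⟩
    have : 8*(n:ℤ)+6 = 4*K + (8*s+1) := by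
      rw [hK]; linear_combination hxyz + (x+2*a1)*ha1 + (z+2*c1)*hc1 + hs
    omega
  -- (0,1,1) : y,z odd, x even
  · exact main y z x (by linear_combination hxyz) hy hz hx
  -- (1,0,0)
  · exfalso
    obtain ⟨b1, hb1⟩ : ∃ b1, y = 2*b1 := ⟨y/2, by omega⟩
    obtain ⟨c1, hc1⟩ : ∃ c1, z = 2*c1 := ⟨z/2, by omega⟩
    obtain ⟨s, hs⟩ := odd_sq_int x hx
    obtain ⟨K, hK⟩ : ∃ K : ℤ, K = b1^2 + c1^2 := ⟨_, rfl⟩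
    have : 8*(n:ℤ)+6 = 4*K + (8*s+1) := by
      rw [hK]; linear_combination hxyz + (y+2*b1)*hb1 + (z+2*c1)*hc1 + hs
    omega
  -- (1,0,1) : x,z odd, y even
  · exact main x z y (by linear_combination hxyz) hx hz hy
  -- (1,1,0) : x,y odd, z even
  · exact main x y z hxyz hx hy hz
  -- (1,1,1)
  · exfalso
    obtain ⟨s, hs⟩ := odd_sq_int x hx
    obtain ⟨t, ht⟩ := odd_sq_int y hy
    obtain ⟨u, hu⟩ := odd_sq_int z hz
    have : 8*(n:ℤ)+6 = (8*s+1)+(8*t+1)+(8*u+1) := by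
      linear_combination hxyz + hs + ht + hu
    omega
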